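/- Let A and B be alphabets, let S be a semigroup, and let φ : A⁺ → S and ψ : B⁺ → S be surjective semigroup homomorphisms. If the fiber product Π(φ,ψ) = {(u,v) ∈ A⁺ × B⁺ : φ(u) = ψ(v)} is finitely generated as a semigroup, then S is idempotent-free, i.e. there is no e ∈ S with e·e = e. -/
import Mathlib


/-- The fiber product of two semigroup homomorphisms with common codomain,
as a subsemigroup of the direct product. -/
def fiberSubsemigroup {S T F : Type*} [Semigroup S] [Semigroup T] [Semigroup F]
    (φ : S →ₙ* F) (ψ : T →ₙ* F) : Subsemigroup (S × T) where
  carrier := {p | φ p.1 = ψ p.2}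
  mul_mem' := by
    intro a b ha hb
    simp only [Set.mem_setOf_eq, Prod.fst_mul, Prod.snd_mul, map_mul] at *
    rw [ha, hb]

/-- A subsemigroup is finitely generated if it is the closure of a finite subset. -/
def SubsemigroupFG {M : Type*} [Mul M] (P : Subsemigroup M) : Prop :=
  ∃ X : Set M, X.Finite ∧ Subsemigroup.closure X = P

/-- if the fiber product of two free semigroups over a semigroup
`S` is finitely generated, then `S` is idempotent-free. -/
theorem stmt9 {A B S : Type} [Semigroup S]
    (φ : FreeSemigroup A →ₙ* S) (ψ : FreeSemigroup B →ₙ* S)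
    (hφ : Function.Surjective φ) (hψ : Function.Surjective ψ)
    (h : SubsemigroupFG (fiberSubsemigroup φ ψ)) :
    ∀ e : S, e * e ≠ e := by
  rintro e he
  obtain ⟨X, hXfin, hXcl⟩ := h
  obtain ⟨u, hu⟩ := hφ e
  obtain ⟨v, hv⟩ := hψ e
  -- bound on second-component lengths of generators
  obtain ⟨L, hL⟩ : ∃ L : ℕ, ∀ x ∈ X, (x : FreeSemigroup A × FreeSemigroup B).2.length ≤ L := by
    obtain ⟨L, hL⟩ := (hXfin.image (fun x => x.2.length)).bddAbove
    exact ⟨L, fun x hx => hL (Set.mem_image_of_mem _ hx)⟩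
  -- key: all elements of the closure satisfy p.2.length ≤ L * p.1.length
  have key : ∀ p ∈ Subsemigroup.closure X,
      (p : FreeSemigroup A × FreeSemigroup B).2.length ≤ L * p.1.length := by
    intro p hp
    induction hp using Subsemigroup.closure_induction with
    | mem x hx =>
        calc x.2.length ≤ L := hL x hx
        _ = L * 1 := (mul_one L).symm
        _ ≤ L * x.1.length := Nat.mul_le_mul_left L (Nat.one_le_iff_ne_zero.mpr
              (by have := x.1.length; simp [FreeSemigroup.length]))
    | mul x y _ _ hx hy =>
        simp only [Prod.snd_mul, Prod.fst_mul, FreeSemigroup.length_mul, Nat.mul_add]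
        omega
  -- build long words mapping to e
  have words : ∀ n : ℕ, ∃ w : FreeSemigroup B, ψ w = e ∧ n ≤ w.length := by
    intro n
    induction n with
    | zero => exact ⟨v, hv, Nat.zero_le _⟩
    | succ k ih =>
        obtain ⟨w, hw, hlen⟩ := ih
        refine ⟨w * v, by rw [map_mul, hw, hv, he], ?_⟩
        rw [FreeSemigroup.length_mul]
        have : 1 ≤ v.length := by simp [FreeSemigroup.length]
        omega
  obtain ⟨w, hw, hlen⟩ := words (L * u.length + 1)
  have hmem : (u, w) ∈ Subsemigroup.closure X := by
    rw [hXcl]; show φ u = ψ w; rw [hu, hw]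
  have := key (u, w) hmem
  simp only at this
  omega
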